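/- Let C be a finite chain with at least one tooth and one hole, and suppose φ ≠ 0 solves the binary-chain eigenvalue equation φ(n+1) + φ(n-1) = 0 at holes, φ(n+1) + φ(n-1) = Vφ(n) at teeth, with V > 2 and Dirichlet boundary conditions. Then every tooth of C is isolated (bounded by holes or endpoints on both sides), and the distances between consecutive teeth (counting the endpoints as teeth) are all even; equivalently, C is a 2-tooth chain. -/

import Mathlib

def RR (V x y : ℝ) : Prop :=
  (0 < x * y ∧ V / 2 * |x| ≤ |y|) ∨ (x * y < 0 ∧ V / 2 * |y| ≤ |x|)

lemma RR_hole {V x y : ℝ} (h : RR V x y) : RR V y (0 - x) := by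
  rcases h with ⟨hp, hm⟩ | ⟨hp, hm⟩
  · right
    constructor
    · nlinarith
    · simpa using hm
  · left
    constructor
    · nlinarith
    · simpa using hm

lemma RR_tooth {V x y : ℝ} (hV : 2 < V) (h : RR V x y) : RR V y (V * y - x) := by
  have hy : y ≠ 0 := by
    rcases h with ⟨hp, _⟩ | ⟨hp, _⟩ <;> intro h0 <;> rw [h0] at hp <;> simp at hp
  have hya : 0 < |y| := abs_pos.mpr hy
  rcases h with ⟨hp, hm⟩ | ⟨hp, hm⟩
  · have hxy : |x| * |y| = x * y := by rw [← abs_mul]; exact abs_of_pos hp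
    have hsq : |y| * |y| = y * y := by rw [← abs_mul]; exact abs_of_nonneg (mul_self_nonneg y)
    have hmul : V / 2 * |x| * |y| ≤ |y| * |y| := by nlinarith
    have hpos : 0 < y * (V * y - x) := by nlinarith
    left
    refine ⟨hpos, ?_⟩
    have habs : |V * y - x| * |y| = y * (V * y - x) := by
      rw [mul_comm, ← abs_mul, abs_of_pos hpos]
    rw [← mul_le_mul_iff_of_pos_right hya, habs]
    nlinarith
  · have hxy : |x| * |y| = -(x * y) := by
      rw [← abs_mul]; exact abs_of_neg hp
    have hsq : |y| * |y| = y * y := by rw [← abs_mul]; exact abs_of_nonneg (mul_self_nonneg y)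
    have hpos : 0 < y * (V * y - x) := by nlinarith
    left
    refine ⟨hpos, ?_⟩
    have habs : |V * y - x| * |y| = y * (V * y - x) := by
      rw [mul_comm, ← abs_mul, abs_of_pos hpos]
    rw [← mul_le_mul_iff_of_pos_right hya, habs]
    nlinarith

/-- If `φ ≠ 0` solves the `E = 0` binary-chain equation (`φ(n+1) + φ(n-1) = 0` at holes,
`φ(n+1) + φ(n-1) = Vφ(n)` at teeth) with `V > 2` and Dirichlet boundary conditions on a
chain with at least one tooth and one hole, then all teeth are isolated and all gaps
between consecutive teeth (counting the endpoints `0` and `L` as teeth) are even: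
the chain is a 2-tooth chain. -/
theorem stmt17 (L : ℤ) (hL : 2 ≤ L) (χ : ℤ → Bool) (V : ℝ) (hV : 2 < V)
    (htooth : ∃ n : ℤ, 1 ≤ n ∧ n ≤ L - 1 ∧ χ n = true)
    (hhole : ∃ n : ℤ, 1 ≤ n ∧ n ≤ L - 1 ∧ χ n = false)
    (φ : ℤ → ℝ) (hb : φ 0 = 0 ∧ φ L = 0)
    (hφ0 : ∃ n : ℤ, 1 ≤ n ∧ n ≤ L - 1 ∧ φ n ≠ 0)
    (heq : ∀ n : ℤ, 1 ≤ n → n ≤ L - 1 →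
      φ (n + 1) + φ (n - 1) = if χ n then V * φ n else 0) :
    (∀ n : ℤ, 1 ≤ n → n ≤ L - 1 → χ n = true →
      (∀ m : ℤ, 1 ≤ m → m ≤ L - 1 → (m = n + 1 ∨ m = n - 1) → χ m = false)) ∧
    (∀ m n : ℤ,
      (m = 0 ∨ m = L ∨ (1 ≤ m ∧ m ≤ L - 1 ∧ χ m = true)) →
      (n = 0 ∨ n = L ∨ (1 ≤ n ∧ n ≤ L - 1 ∧ χ n = true)) →
      (2 : ℤ) ∣ (m - n)) := by
  classical
  obtain ⟨hb0, hbL⟩ := hb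
  have hV0 : (0:ℝ) < V := by linarith
  have hrec : ∀ n : ℤ, 1 ≤ n → n ≤ L - 1 →
      φ (n + 1) = (if χ n then V * φ n else 0) - φ (n - 1) := by
    intro n h1 h2; have := heq n h1 h2; linarith
  -- φ 1 ≠ 0
  have ha : φ 1 ≠ 0 := by
    intro h0
    have key : ∀ n : ℤ, 0 ≤ n → n ≤ L - 1 → φ n = 0 ∧ φ (n + 1) = 0 := by
      refine Int.le_induction ?_ ?_
      · intro _
        refine ⟨hb0, ?_⟩
        show φ (0 + 1) = 0
        norm_num [h0]
      · intro n hn ih hle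
        have h' := ih (by linarith)
        have he := hrec (n + 1) (by linarith) hle
        have hid : n + 1 - 1 = n := by ring
        rw [hid] at he
        refine ⟨h'.2, ?_⟩
        rw [he, h'.2, h'.1]
        cases hc : χ (n + 1) <;> simp [hc]
    obtain ⟨m, hm1, hm2, hm3⟩ := hφ0
    exact hm3 (key m (by linarith) hm2).1
  -- the structure lemma: as long as all teeth so far are even,
  -- φ vanishes exactly at even sites
  have G : ∀ n : ℤ, 0 ≤ n → n ≤ L - 1 →
      (∀ k : ℤ, 1 ≤ k → k ≤ n → χ k = true → (2:ℤ) ∣ k) →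
      (((2:ℤ) ∣ n → φ n = 0 ∧ φ (n + 1) ≠ 0) ∧
       (¬ (2:ℤ) ∣ n → φ n ≠ 0 ∧ φ (n + 1) = 0)) := by
    refine Int.le_induction ?_ ?_
    · intro _ _
      constructor
      · intro _
        refine ⟨hb0, ?_⟩
        show φ (0 + 1) ≠ 0
        norm_num [ha]
      · intro h; exact absurd (dvd_zero 2) h
    · intro n hn ih hle hteeth
      have hle' : n ≤ L - 1 := by linarith
      have ih' := ih hle' (fun k h1 h2 h3 => hteeth k h1 (by linarith) h3)
      have he := hrec (n + 1) (by linarith) hle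
      have hid : n + 1 - 1 = n := by ring
      rw [hid] at he
      by_cases hpar : (2:ℤ) ∣ n
      · -- n even, n+1 odd
        have hodd : ¬ (2:ℤ) ∣ (n + 1) := by omega
        obtain ⟨e1, e2⟩ := ih'.1 hpar
        have hχ : χ (n + 1) = false := by
          cases hc : χ (n + 1)
          · rfl
          · exact absurd (hteeth (n + 1) (by linarith) le_rfl hc) hodd
        rw [hχ, if_neg Bool.false_ne_true] at he
        constructor
        · intro h; exact absurd h hodd
        · intro _
          refine ⟨e2, ?_⟩
          rw [he, e1]
          simp
      · -- n odd, n+1 even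
        obtain ⟨e1, e2⟩ := ih'.2 hpar
        have heven : (2:ℤ) ∣ (n + 1) := by omega
        constructor
        · intro _
          refine ⟨e2, ?_⟩
          rw [he, e2]
          intro hzero
          apply e1
          cases hc : χ (n + 1) <;> rw [hc] at hzero <;> simp at hzero <;> linarith [hzero]
        · intro h; exact absurd heven h
  -- all teeth are even
  have hall_even : ∀ k : ℤ, 1 ≤ k → k ≤ L - 1 → χ k = true → (2:ℤ) ∣ k := by
    by_contra hbad
    push_neg at hbad
    obtain ⟨t0, ht01, ht02, ht03, ht04⟩ := hbad
    -- least odd tooth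
    obtain ⟨t, ⟨ht1, ht2, ht3, ht4⟩, htmin⟩ :=
      Int.exists_least_of_bdd (P := fun k => 1 ≤ k ∧ k ≤ L - 1 ∧ χ k = true ∧ ¬ (2:ℤ) ∣ k)
        ⟨1, fun z hz => hz.1⟩ ⟨t0, ht01, ht02, ht03, ht04⟩
    have hteeth : ∀ k : ℤ, 1 ≤ k → k ≤ t - 1 → χ k = true → (2:ℤ) ∣ k := by
      intro k h1 h2 h3
      by_contra h4
      have := htmin k ⟨h1, by linarith, h3, h4⟩
      omega
    have hG := G (t - 1) (by omega) (by omega) hteeth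
    have hpar : (2:ℤ) ∣ (t - 1) := by omega
    obtain ⟨e1, e2⟩ := hG.1 hpar
    have hid : t - 1 + 1 = t := by ring
    rw [hid] at e2
    -- the entry edge
    have he := hrec t ht1 ht2
    rw [ht3, if_pos rfl] at he
    have hentry : RR V (φ t) (φ (t + 1)) := by
      rw [he, e1, sub_zero]
      left
      constructor
      · have := sq_nonneg (φ t)
        have : 0 < φ t * φ t := by
          rcases lt_or_gt_of_ne e2 with h | h <;> nlinarith
        nlinarith
      · rw [abs_mul, abs_of_pos hV0]
        nlinarith [abs_nonneg (φ t)]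
    -- propagate the invariant to the right end
    have prop : ∀ m : ℤ, t ≤ m → m ≤ L - 1 → RR V (φ m) (φ (m + 1)) := by
      refine Int.le_induction ?_ ?_
      · intro _; exact hentry
      · intro m hm ih hle
        have hR := ih (by linarith)
        have he' := hrec (m + 1) (by linarith) hle
        have hid' : m + 1 - 1 = m := by ring
        rw [hid'] at he'
        cases hc : χ (m + 1)
        · rw [hc, if_neg Bool.false_ne_true] at he'
          rw [he']
          exact RR_hole hR
        · rw [hc, if_pos rfl] at he'
          rw [he']
          exact RR_tooth hV hR
    have hend := prop (L - 1) (by omega) le_rfl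
    rw [show L - 1 + 1 = L from by ring, hbL] at hend
    rcases hend with ⟨hp, _⟩ | ⟨hp, _⟩ <;> simp at hp
  -- L is even
  have hLeven : (2:ℤ) ∣ L := by
    by_contra hodd
    have hG := G (L - 1) (by omega) le_rfl
      (fun k h1 h2 h3 => hall_even k h1 h2 h3)
    obtain ⟨_, e2⟩ := hG.1 (by omega)
    rw [show L - 1 + 1 = L from by ring] at e2
    exact e2 hbL
  constructor
  · intro n h1 h2 h3 m hm1 hm2 hmn
    cases hc : χ m
    · rfl
    · have d1 := hall_even n h1 h2 h3
      have d2 := hall_even m hm1 hm2 hc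
      rcases hmn with rfl | rfl <;> omega
  · have hdvd : ∀ m : ℤ, (m = 0 ∨ m = L ∨ (1 ≤ m ∧ m ≤ L - 1 ∧ χ m = true)) → (2:ℤ) ∣ m := by
      rintro m (rfl | rfl | ⟨h1, h2, h3⟩)
      · exact dvd_zero 2
      · exact hLeven
      · exact hall_even m h1 h2 h3
    intro m n hm hn
    have d1 := hdvd m hm
    have d2 := hdvd n hn
    omega
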